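/- Let τ > 1/2 and ρ > 0. Then for every positive integer d, the sum ∑_{i=1}^{d} i^{−2τ}/(i^{−2τ} + ρ) = ∑_{i=1}^{d} 1/(1 + i^{2τ} ρ) is bounded above by (π / (2τ · sin(π/(2τ)))) · ρ^{−1/(2τ)}. In particular, if the eigenvalues of the sample covariance matrix follow the polynomial decay σ_i² = i^{−2τ}, then the numerical rank γ(C, ρ) = ∑_{i=1}^d σ_i²/(σ_i² + ρ) is O(ρ^{−1/(2τ)}). -/

import Mathlib

section Aux
open Real Set MeasureTheory intervalIntegral

lemma beta_real {a : ℝ} (ha : 0 < a) (ha1 : a < 1) :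
    ∫ t in (0:ℝ)..1, t ^ (a - 1) * (1 - t) ^ (-a) = π / Real.sin (π * a) := by
  have h1 : Complex.betaIntegral a (1 - a) = ((π / Real.sin (π * a) : ℝ) : ℂ) := by
    have h2 := Complex.Gamma_mul_Gamma_eq_betaIntegral
      (s := (a : ℂ)) (t := 1 - (a : ℂ)) (by simpa using ha) (by simp [ha1])
    rw [add_sub_cancel, Complex.Gamma_one, one_mul] at h2
    rw [← h2, Complex.Gamma_mul_Gamma_one_sub]
    push_cast [Complex.ofReal_sin]
    rfl
  have h3 : Complex.betaIntegral a (1 - a)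
      = ((∫ t in (0:ℝ)..1, t ^ (a - 1) * (1 - t) ^ (-a) : ℝ) : ℂ) := by
    rw [Complex.betaIntegral, ← intervalIntegral.integral_ofReal]
    refine intervalIntegral.integral_congr fun x hx => ?_
    rw [uIcc_of_le zero_le_one] at hx
    push_cast
    rw [Complex.ofReal_cpow hx.1, Complex.ofReal_cpow (by linarith [hx.2] : (0:ℝ) ≤ 1 - x)]
    push_cast
    ring_nf
  rw [h3] at h1
  exact_mod_cast h1

lemma beta_Ioi {a : ℝ} (ha : 0 < a) (ha1 : a < 1) :
    ∫ u in Ioi (0:ℝ), u ^ (a - 1) / (1 + u) = π / Real.sin (π * a) := by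
  have himg : (fun t : ℝ => t / (1 - t)) '' Ioo 0 1 = Ioi 0 := by
    ext u
    constructor
    · rintro ⟨t, ht, rfl⟩
      exact div_pos ht.1 (by linarith [ht.2])
    · intro hu
      refine ⟨u / (1 + u), ⟨div_pos hu (by linarith [mem_Ioi.mp hu]), ?_⟩, ?_⟩
      · rw [div_lt_one (by linarith [mem_Ioi.mp hu])]; linarith [mem_Ioi.mp hu]
      · have h1u : (0:ℝ) < 1 + u := by linarith [mem_Ioi.mp hu]
        field_simp
        ring
  have hderiv : ∀ t ∈ Ioo (0:ℝ) 1, HasDerivWithinAt (fun t : ℝ => t / (1 - t))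
      (((1 - t) ^ 2)⁻¹) (Ioo 0 1) t := by
    intro t ht
    have h1t : (1:ℝ) - t ≠ 0 := by have := ht.2; intro h; linarith [h]
    have := (hasDerivAt_id t).div ((hasDerivAt_id t).const_sub 1) h1t
    exact this.hasDerivWithinAt.congr_deriv (by simp only [id_eq]; field_simp; ring)
  have hinj : InjOn (fun t : ℝ => t / (1 - t)) (Ioo 0 1) := by
    intro x hx y hy hxy
    have hx1 : (1:ℝ) - x ≠ 0 := by have := hx.2; intro h; linarith
    have hy1 : (1:ℝ) - y ≠ 0 := by have := hy.2; intro h; linarith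
    field_simp at hxy
    linarith
  have := MeasureTheory.integral_image_eq_integral_abs_deriv_smul (measurableSet_Ioo)
    hderiv hinj (fun u => u ^ (a - 1) / (1 + u))
  rw [himg] at this
  rw [this]
  rw [← beta_real ha ha1, intervalIntegral.integral_of_le zero_le_one,
    MeasureTheory.integral_Ioc_eq_integral_Ioo]
  refine MeasureTheory.setIntegral_congr_fun measurableSet_Ioo fun t ht => ?_
  have ht0 : (0:ℝ) < t := ht.1
  have ht1 : (0:ℝ) < 1 - t := by linarith [ht.2]
  have key : 1 + t / (1 - t) = (1 - t)⁻¹ := by field_simp; ring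
  have hdiv : (t / (1 - t)) ^ (a - 1) = t ^ (a - 1) * ((1 - t) ^ (a - 1))⁻¹ := by
    rw [Real.div_rpow ht0.le ht1.le, div_eq_mul_inv]
  simp only [smul_eq_mul, key, hdiv]
  rw [abs_of_nonneg (by positivity)]
  have key2 : (1-t) ^ (-a) * ((1-t)^(a-1) * (1-t)^2) = 1-t := by
    rw [← Real.rpow_natCast (1-t) 2, ← Real.rpow_add ht1, ← Real.rpow_add ht1,
      show -a + (a - 1 + ((2:ℕ):ℝ)) = 1 by push_cast; ring, Real.rpow_one]
  have hsa : (1-t) ^ (a-1) ≠ 0 := by positivity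
  have hs : (1:ℝ) - t ≠ 0 := ht1.ne'
  field_simp
  nlinarith [key2, Real.rpow_pos_of_pos ht0 (a-1), Real.rpow_pos_of_pos ht1 (-a),
    Real.rpow_pos_of_pos ht1 (a-1)]

lemma int_one_add_rpow {p : ℝ} (hp : 1 < p) :
    ∫ x in Ioi (0:ℝ), (1 + x ^ p)⁻¹ = π / (p * Real.sin (π / p)) := by
  have hp0 : 0 < p := by linarith
  have ha : 0 < 1/p := by positivity
  have ha1 : 1/p < 1 := by rw [div_lt_one hp0]; linarith
  have h := MeasureTheory.integral_comp_rpow_Ioi_of_pos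
    (g := fun y : ℝ => y ^ (1/p - 1) / (1 + y)) hp0
  rw [beta_Ioi ha ha1] at h
  have congr1 : ∫ x in Ioi (0:ℝ), (p * x ^ (p - 1)) • ((x ^ p) ^ (1/p - 1) / (1 + x ^ p))
      = ∫ x in Ioi (0:ℝ), p * (1 + x ^ p)⁻¹ := by
    refine MeasureTheory.setIntegral_congr_fun measurableSet_Ioi fun x hx => ?_
    have hx0 : (0:ℝ) < x := hx
    have h1 : (x ^ p) ^ (1/p - 1) = x ^ (1 - p) := by
      rw [← Real.rpow_mul hx0.le]
      congr 1
      field_simp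
    rw [h1, smul_eq_mul, div_eq_mul_inv, ← mul_assoc, mul_assoc p,
      ← Real.rpow_add hx0, show p - 1 + (1 - p) = 0 by ring, Real.rpow_zero, mul_one]
  rw [congr1, MeasureTheory.integral_const_mul, show π * (1/p) = π / p by ring] at h
  have : ∫ x in Ioi (0:ℝ), (1 + x ^ p)⁻¹ = (π / Real.sin (π / p)) / p := by
    rw [eq_div_iff hp0.ne', mul_comm]; exact h
  rw [this, div_div, mul_comm]

lemma int_scaled {p ρ : ℝ} (hp : 1 < p) (hρ : 0 < ρ) :
    ∫ x in Ioi (0:ℝ), (1 + x ^ p * ρ)⁻¹ = ρ ^ (-(1/p)) * (π / (p * Real.sin (π / p))) := by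
  have hp0 : 0 < p := by linarith
  have hb : 0 < ρ ^ (1/p) := Real.rpow_pos_of_pos hρ _
  have h := MeasureTheory.integral_comp_mul_left_Ioi
    (g := fun x : ℝ => (1 + x ^ p)⁻¹) 0 hb
  rw [mul_zero] at h
  have congr1 : ∫ x in Ioi (0:ℝ), (1 + (ρ ^ (1/p) * x) ^ p)⁻¹
      = ∫ x in Ioi (0:ℝ), (1 + x ^ p * ρ)⁻¹ := by
    refine MeasureTheory.setIntegral_congr_fun measurableSet_Ioi fun x hx => ?_
    have hx0 : (0:ℝ) < x := hx
    rw [Real.mul_rpow hb.le hx0.le, ← Real.rpow_mul hρ.le,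
      one_div_mul_cancel hp0.ne', Real.rpow_one, mul_comm]
  rw [congr1] at h
  rw [h, int_one_add_rpow hp, smul_eq_mul, ← Real.rpow_neg_one,
    ← Real.rpow_mul hρ.le]
  norm_num

lemma integ_f {p ρ : ℝ} (hp : 1 < p) (hρ : 0 < ρ) :
    MeasureTheory.IntegrableOn (fun x : ℝ => (1 + x ^ p * ρ)⁻¹) (Ioi 0) := by
  have hp0 : 0 < p := by linarith
  have hcont : ContinuousOn (fun x : ℝ => (1 + x ^ p * ρ)⁻¹) (Ici 0) := by
    refine ContinuousOn.inv₀ ?_ fun x hx => ?_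
    · exact (continuousOn_const.add
        ((continuousOn_id.rpow_const fun x _ => Or.inr hp0.le).mul continuousOn_const))
    · have : 0 ≤ x ^ p * ρ := mul_nonneg (Real.rpow_nonneg hx _) hρ.le
      positivity
  have h01 : MeasureTheory.IntegrableOn (fun x : ℝ => (1 + x ^ p * ρ)⁻¹) (Ioc 0 1) :=
    ((hcont.mono (Icc_subset_Ici_self)).integrableOn_Icc).mono_set Ioc_subset_Icc_self
  have h1 : MeasureTheory.IntegrableOn (fun x : ℝ => (1 + x ^ p * ρ)⁻¹) (Ioi 1) := by
    have hg : MeasureTheory.IntegrableOn (fun x : ℝ => ρ⁻¹ * x ^ (-p)) (Ioi 1) :=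
      (integrableOn_Ioi_rpow_of_lt (by linarith) one_pos).const_mul _
    refine MeasureTheory.Integrable.mono hg
      ((hcont.mono fun x hx => le_of_lt (by exact lt_trans one_pos (mem_Ioi.mp hx))).aestronglyMeasurable
        measurableSet_Ioi) ?_
    filter_upwards [MeasureTheory.ae_restrict_mem measurableSet_Ioi] with x hx
    have hx1 : (1:ℝ) < x := hx
    have hxp : 0 < x ^ p := Real.rpow_pos_of_pos (by linarith) _
    rw [Real.norm_eq_abs, Real.norm_eq_abs, abs_of_nonneg (by positivity),
      abs_of_nonneg (by positivity), Real.rpow_neg (by linarith : (0:ℝ) ≤ x)]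
    rw [← one_div, ← one_div]
    calc 1 / (1 + x ^ p * ρ) ≤ 1 / (x ^ p * ρ) := by
          apply one_div_le_one_div_of_le (by positivity); linarith
      _ = ρ⁻¹ * (1 / x ^ p) := by field_simp
      _ ≤ 1 / ρ * (x ^ p)⁻¹ := by rw [one_div, one_div]
  have : Ioi (0:ℝ) = Ioc 0 1 ∪ Ioi 1 := (Ioc_union_Ioi_eq_Ioi zero_le_one).symm
  rw [this]
  exact h01.union h1

end Aux


open Real Finset

/-- polynomial eigenvalue decay.  For `τ > 1/2`, `ρ > 0` and any
positive integer `d`,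
`∑_{i=1}^d i^{-2τ}/(i^{-2τ} + ρ) = ∑_{i=1}^d 1/(1 + i^{2τ} ρ)
   ≤ (π / (2τ sin(π/(2τ)))) ρ^{-1/(2τ)}`. -/
theorem numerical_rank_poly_decay (τ ρ : ℝ) (hτ : 1 / 2 < τ) (hρ : 0 < ρ) :
    ∀ d : ℕ, 0 < d →
      (∑ i ∈ Finset.Icc 1 d, (i : ℝ) ^ (-(2 * τ)) / ((i : ℝ) ^ (-(2 * τ)) + ρ)
          = ∑ i ∈ Finset.Icc 1 d, 1 / (1 + (i : ℝ) ^ (2 * τ) * ρ)) ∧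
      ∑ i ∈ Finset.Icc 1 d, 1 / (1 + (i : ℝ) ^ (2 * τ) * ρ)
          ≤ π / (2 * τ * Real.sin (π / (2 * τ))) * ρ ^ (-(1 / (2 * τ))) := by
  intro d hd
  set p : ℝ := 2 * τ with hpdef
  have hp : 1 < p := by simp only [hpdef]; linarith
  have hp0 : 0 < p := by linarith
  constructor
  · refine Finset.sum_congr rfl fun i hi => ?_
    have hi1 : 1 ≤ i := (Finset.mem_Icc.mp hi).1
    have hi0 : (0:ℝ) < (i:ℝ) := by exact_mod_cast hi1
    have hc : (0:ℝ) < (i:ℝ) ^ p := Real.rpow_pos_of_pos hi0 _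
    rw [Real.rpow_neg hi0.le]
    rw [div_eq_div_iff (by positivity : (0:ℝ) < ((i:ℝ)^p)⁻¹ + ρ).ne'
      (by positivity : (0:ℝ) < 1 + (i:ℝ) ^ p * ρ).ne']
    field_simp
  · -- main inequality
    set f : ℝ → ℝ := fun x => (1 + x ^ p * ρ)⁻¹ with hfdef
    have hanti : AntitoneOn f (Set.Icc (0:ℝ) (0 + d)) := by
      intro x hx y hy hxy
      have hx0 : 0 ≤ x := hx.1
      have h1 : x ^ p ≤ y ^ p := Real.rpow_le_rpow hx0 hxy hp0.le
      have hpos : 0 < 1 + x ^ p * ρ := by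
        have := Real.rpow_nonneg hx0 p; positivity
      exact inv_anti₀ hpos (by nlinarith)
    have hsum : ∑ i ∈ Finset.Icc 1 d, 1 / (1 + (i : ℝ) ^ p * ρ)
        = ∑ i ∈ Finset.range d, f (0 + ((i + 1 : ℕ) : ℝ)) := by
      rw [← Finset.Ico_add_one_right_eq_Icc, Finset.sum_Ico_eq_sum_range]
      refine Finset.sum_congr rfl fun i _ => ?_
      rw [hfdef, one_div]
      push_cast
      ring_nf
    have hle1 := hanti.sum_le_integral
    have hle2 : (∫ x in (0:ℝ)..(0 + d : ℝ), f x) ≤ ∫ x in Set.Ioi (0:ℝ), f x := by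
      rw [intervalIntegral.integral_of_le (by positivity)]
      refine MeasureTheory.setIntegral_mono_set (integ_f hp hρ) ?_ ?_
      · filter_upwards [MeasureTheory.ae_restrict_mem measurableSet_Ioi] with x hx
        have h0 : (0:ℝ) ≤ x ^ p := Real.rpow_nonneg (le_of_lt hx) p
        simp only [hfdef, Pi.zero_apply]
        positivity
      · filter_upwards with x hx
        exact hx.1
    have hval : (∫ x in Set.Ioi (0:ℝ), f x) = ρ ^ (-(1/p)) * (π / (p * Real.sin (π / p))) :=
      int_scaled hp hρ
    calc ∑ i ∈ Finset.Icc 1 d, 1 / (1 + (i : ℝ) ^ p * ρ)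
        = ∑ i ∈ Finset.range d, f (0 + ((i + 1 : ℕ) : ℝ)) := hsum
      _ ≤ ∫ x in (0:ℝ)..(0 + d : ℝ), f x := by exact_mod_cast hle1
      _ ≤ ∫ x in Set.Ioi (0:ℝ), f x := hle2
      _ = π / (p * Real.sin (π / p)) * ρ ^ (-(1/p)) := by rw [hval, mul_comm]
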